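/- The map f is borderline Collatz-like: the limit lim_{n→∞} ( ∏_{r=1}^{n} f(r)/r )^{1/n} exists and equals 1. -/

import Mathlib

/-- The map `f(n) = ⌊n/√2⌋` if `n` is even and `f(n) = ⌊n·√2⌋` if `n` is odd. -/
noncomputable def f (n : ℕ) : ℕ :=
  if Even n then ⌊(n : ℝ) / Real.sqrt 2⌋₊ else ⌊(n : ℝ) * Real.sqrt 2⌋₊

noncomputable def cc (r : ℕ) : ℝ := if Even r then (Real.sqrt 2)⁻¹ else Real.sqrt 2

noncomputable def bb (r : ℕ) : ℝ := if r = 1 then (Real.sqrt 2)⁻¹ else (((r : ℝ) - 1) / r) ^ 2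

lemma sqrt2_pos : (0 : ℝ) < Real.sqrt 2 := Real.sqrt_pos.mpr (by norm_num)

lemma sqrt2_gt_one : (1 : ℝ) < Real.sqrt 2 := by
  nlinarith [Real.sq_sqrt (by norm_num : (2:ℝ) ≥ 0), sqrt2_pos]

lemma sqrt2_lt : Real.sqrt 2 < 1.5 := by
  nlinarith [Real.sq_sqrt (by norm_num : (2:ℝ) ≥ 0), sqrt2_pos]

lemma cc_pos (r : ℕ) : 0 < cc r := by
  unfold cc; split <;> positivity

lemma bb_pos {r : ℕ} (hr : 1 ≤ r) : 0 < bb r := by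
  unfold bb
  split
  · positivity
  · rename_i h
    have : 2 ≤ r := by omega
    have : (2 : ℝ) ≤ r := by exact_mod_cast this
    have h1 : (0:ℝ) < (r : ℝ) - 1 := by linarith
    positivity

lemma prod_cc (n : ℕ) :
    ∏ r ∈ Finset.Icc 1 n, cc r = if Even n then 1 else Real.sqrt 2 := by
  induction n with
  | zero => simp
  | succ n ih =>
    rw [Finset.prod_Icc_succ_top (by omega), ih]
    rcases Nat.even_or_odd n with h | h
    · have h' : ¬ Even (n + 1) := by simp [Nat.even_add_one, h]
      simp [cc, h, h', Nat.even_add_one]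
    · have h' : Even (n + 1) := by simpa [Nat.even_add_one] using (Nat.not_even_iff_odd.mpr h)
      have hn : ¬ Even n := (Nat.not_even_iff_odd.mpr h)
      simp [cc, hn, h', Real.sqrt_ne_zero'.mpr (by norm_num : (0:ℝ) < 2)]

lemma prod_bb {n : ℕ} (hn : 1 ≤ n) :
    ∏ r ∈ Finset.Icc 1 n, bb r = (Real.sqrt 2)⁻¹ / (n : ℝ) ^ 2 := by
  induction n with
  | zero => omega
  | succ n ih =>
    rcases Nat.eq_or_lt_of_le hn with h | h
    · simp [← h, bb]
    · have hn1 : 1 ≤ n := by omega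
      rw [Finset.prod_Icc_succ_top (by omega), ih hn1]
      have hne : n + 1 ≠ 1 := by omega
      have hnR : (0:ℝ) < (n : ℝ) := by exact_mod_cast hn1
      have hnR1 : (0:ℝ) < (n : ℝ) + 1 := by linarith
      rw [bb, if_neg hne]
      push_cast
      field_simp
      ring

lemma f_upper {r : ℕ} (hr : 1 ≤ r) : (f r : ℝ) / r ≤ cc r := by
  have hrR : (0:ℝ) < (r : ℝ) := by exact_mod_cast hr
  unfold f cc
  split
  · have := Nat.floor_le (a := (r : ℝ) / Real.sqrt 2) (by positivity)
    rw [div_le_iff₀ hrR]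
    calc (⌊(r : ℝ) / Real.sqrt 2⌋₊ : ℝ) ≤ (r : ℝ) / Real.sqrt 2 := this
      _ = (Real.sqrt 2)⁻¹ * r := by ring
  · have := Nat.floor_le (a := (r : ℝ) * Real.sqrt 2) (by positivity)
    rw [div_le_iff₀ hrR]
    linarith

lemma f_lower {r : ℕ} (hr : 1 ≤ r) : cc r * bb r ≤ (f r : ℝ) / r := by
  have hrR : (1:ℝ) ≤ (r : ℝ) := by exact_mod_cast hr
  have s2 := sqrt2_gt_one
  have s2' := sqrt2_lt
  have ssq : Real.sqrt 2 * Real.sqrt 2 = 2 := Real.mul_self_sqrt (by norm_num)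
  rcases eq_or_lt_of_le hr with h1 | h2
  · -- r = 1
    have hr1 : r = 1 := h1.symm
    subst hr1
    have hodd : ¬ Even 1 := by decide
    have hfl : ⌊(1 : ℝ) * Real.sqrt 2⌋₊ = 1 := by
      rw [one_mul]
      rw [Nat.floor_eq_iff (by norm_num)]
      constructor
      · exact_mod_cast s2.le
      · push_cast; linarith
    simp [f, cc, bb, hodd, hfl]
  · -- r ≥ 2
    have hr2 : (2:ℝ) ≤ (r : ℝ) := by exact_mod_cast h2
    have hrpos : (0:ℝ) < (r : ℝ) := by linarith
    have hne : r ≠ 1 := by omega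
    unfold f cc bb
    rw [if_neg hne]
    split
    · -- even: f r = ⌊r/√2⌋ ≥ r/√2 - 1
      have hfl : (r : ℝ) / Real.sqrt 2 - 1 < (⌊(r : ℝ) / Real.sqrt 2⌋₊ : ℝ) :=
        Nat.sub_one_lt_floor _
      rw [le_div_iff₀ hrpos]
      have s2l : (1.4:ℝ) < Real.sqrt 2 := by nlinarith
      have hinv : (Real.sqrt 2)⁻¹ = Real.sqrt 2 / 2 := by
        rw [inv_eq_one_div, div_eq_div_iff sqrt2_pos.ne' two_ne_zero, one_mul, ssq]
      have hdiv : (r:ℝ) / Real.sqrt 2 = (r:ℝ) * Real.sqrt 2 / 2 := by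
        rw [div_eq_div_iff sqrt2_pos.ne' two_ne_zero, mul_assoc, ssq]
      have key : (Real.sqrt 2)⁻¹ * (((r:ℝ) - 1) / r) ^ 2 * r ≤ (r : ℝ) / Real.sqrt 2 - 1 := by
        have e : Real.sqrt 2 / 2 * (((r:ℝ) - 1) / r) ^ 2 * r
            = Real.sqrt 2 * ((r:ℝ) - 1) ^ 2 / (2 * r) := by
          field_simp
        rw [hinv, hdiv, e, div_le_iff₀ (by positivity)]
        nlinarith [mul_lt_mul_of_pos_right s2l (show (0:ℝ) < 2*(r:ℝ) - 1 by linarith)]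
      linarith
    · -- odd: f r = ⌊r√2⌋ ≥ r√2 - 1
      have hfl : (r : ℝ) * Real.sqrt 2 - 1 < (⌊(r : ℝ) * Real.sqrt 2⌋₊ : ℝ) :=
        Nat.sub_one_lt_floor _
      rw [le_div_iff₀ hrpos]
      have key : Real.sqrt 2 * (((r:ℝ) - 1) / r) ^ 2 * r ≤ (r : ℝ) * Real.sqrt 2 - 1 := by
        have e : Real.sqrt 2 * (((r:ℝ) - 1) / r) ^ 2 * r
            = Real.sqrt 2 * ((r:ℝ) - 1) ^ 2 / r := by
          field_simp
        rw [e, div_le_iff₀ hrpos]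
        nlinarith [mul_lt_mul_of_pos_right s2 (show (0:ℝ) < 2*(r:ℝ) - 1 by linarith)]
      linarith

open Filter in
/-- `f` is borderline Collatz-like:
`lim_{n→∞} (∏_{r=1}^n f(r)/r)^{1/n} = 1`. -/
theorem f_borderline_collatz_like :
    Tendsto (fun n : ℕ => (∏ r ∈ Finset.Icc 1 n, (f r : ℝ) / (r : ℝ)) ^ ((1 : ℝ) / n))
      atTop (nhds 1) := by
  have s2 := sqrt2_gt_one
  have s2pos := sqrt2_pos
  set P : ℕ → ℝ := fun n => ∏ r ∈ Finset.Icc 1 n, (f r : ℝ) / (r : ℝ) with hP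
  -- bounds on P
  have hupper : ∀ n : ℕ, P n ≤ Real.sqrt 2 := by
    intro n
    have h1 : P n ≤ ∏ r ∈ Finset.Icc 1 n, cc r := by
      apply Finset.prod_le_prod
      · intro r hr; positivity
      · intro r hr
        exact f_upper (Finset.mem_Icc.mp hr).1
    rw [prod_cc] at h1
    split at h1
    · linarith
    · exact h1
  have hlower : ∀ n : ℕ, 1 ≤ n → (Real.sqrt 2)⁻¹ / (n : ℝ) ^ 2 ≤ P n := by
    intro n hn
    have h1 : ∏ r ∈ Finset.Icc 1 n, (cc r * bb r) ≤ P n := by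
      apply Finset.prod_le_prod
      · intro r hr
        have hr1 := (Finset.mem_Icc.mp hr).1
        exact (mul_pos (cc_pos r) (bb_pos hr1)).le
      · intro r hr
        exact f_lower (Finset.mem_Icc.mp hr).1
    rw [Finset.prod_mul_distrib, prod_cc, prod_bb hn] at h1
    have hb : (0:ℝ) ≤ (Real.sqrt 2)⁻¹ / (n : ℝ) ^ 2 := by positivity
    split at h1
    · linarith
    · nlinarith
  -- the two bounding sequences
  have hnn : ∀ n : ℕ, 1 ≤ n → (0:ℝ) < (Real.sqrt 2)⁻¹ / (n : ℝ) ^ 2 := by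
    intro n hn
    have : (0:ℝ) < (n:ℝ) := by exact_mod_cast hn
    positivity
  have h0 : Tendsto (fun n : ℕ => (1 : ℝ) / n) atTop (nhds 0) :=
    tendsto_one_div_atTop_nhds_zero_nat
  -- limit of upper bound
  have hU : Tendsto (fun n : ℕ => (Real.sqrt 2) ^ ((1 : ℝ) / n)) atTop (nhds 1) := by
    have := (Real.continuousAt_const_rpow (a := Real.sqrt 2) (b := 0)
      (ne_of_gt s2pos)).tendsto.comp h0
    simpa [Function.comp_def, Real.rpow_zero] using this
  -- limit of lower bound
  have hA : Tendsto (fun n : ℕ => (Real.sqrt 2)⁻¹ ^ ((1 : ℝ) / n)) atTop (nhds 1) := by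
    have := (Real.continuousAt_const_rpow (a := (Real.sqrt 2)⁻¹) (b := 0)
      (by positivity)).tendsto.comp h0
    simpa [Function.comp_def, Real.rpow_zero] using this
  have hBase : Tendsto (fun n : ℕ => (n : ℝ) ^ ((1 : ℝ) / n)) atTop (nhds 1) :=
    tendsto_rpow_div.comp tendsto_natCast_atTop_atTop
  have hB : Tendsto (fun n : ℕ => ((n : ℝ) ^ 2) ^ ((1 : ℝ) / n)) atTop (nhds 1) := by
    have h2 : Tendsto (fun n : ℕ => ((n : ℝ) ^ ((1 : ℝ) / n)) ^ 2) atTop (nhds 1) := by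
      simpa using hBase.pow 2
    apply h2.congr' ?_
    filter_upwards [eventually_ge_atTop 1] with n hn
    have hnng : (0:ℝ) ≤ (n : ℝ) := by positivity
    rw [← Real.rpow_natCast ((n:ℝ) ^ ((1:ℝ)/n)) 2, ← Real.rpow_mul hnng,
      ← Real.rpow_natCast (n:ℝ) 2, ← Real.rpow_mul hnng, mul_comm]
  have hL : Tendsto (fun n : ℕ => ((Real.sqrt 2)⁻¹ / (n : ℝ) ^ 2) ^ ((1 : ℝ) / n))
      atTop (nhds 1) := by
    have hd := hA.div hB one_ne_zero
    rw [div_one] at hd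
    apply hd.congr' ?_
    filter_upwards [eventually_ge_atTop 1] with n hn
    simp only [Pi.div_apply]
    rw [Real.div_rpow (by positivity) (by positivity)]
  -- squeeze
  refine tendsto_of_tendsto_of_tendsto_of_le_of_le' hL hU ?_ ?_
  · filter_upwards [eventually_ge_atTop 1] with n hn
    exact Real.rpow_le_rpow (hnn n hn).le (hlower n hn) (by positivity)
  · filter_upwards [eventually_ge_atTop 1] with n hn
    have hPnn : 0 ≤ P n := by
      apply Finset.prod_nonneg
      intro r _; positivity
    exact Real.rpow_le_rpow hPnn (hupper n) (by positivity)
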